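/- Lemma 9, part 2 (Scalar recursion: almost sure limits). Let 0 < a < 1, let (x_i)_{i≥1} be i.i.d. integrable real random variables with E(x_1) = m_x, and define y_i = a y_{i−1} + a x_i for i ≥ 1 with deterministic finite initial value y₀. Then the following hold: (i) y_i / i → 0 almost surely; (ii) (1/i) Σ_{j=1}^i y_j → a m_x / (1 − a) almost surely; and (iii) limsup_{i→∞} (1/i) Σ_{j=1}^i |y_j| < ∞ almost surely (indeed it is almost surely bounded by a E|x_1|/(1−a)). -/

import Mathlib

open MeasureTheory ProbabilityTheory Filter Topology

-- Icc to range
lemma srl_sum_Icc (f : ℕ → ℝ) (n : ℕ) :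
    ∑ j ∈ Finset.Icc 1 n, f j = ∑ i ∈ Finset.range n, f (i + 1) := by
  induction n with
  | zero => simp
  | succ n ih => rw [Finset.sum_Icc_succ_top (by omega), Finset.sum_range_succ, ih]

-- Cesaro difference
lemma srl_cesaro {t : ℕ → ℝ} {E : ℝ}
    (h : Tendsto (fun n => t n / n) atTop (𝓝 E)) :
    Tendsto (fun n => (t (n + 1) - t n) / ((n : ℝ) + 1)) atTop (𝓝 0) := by
  have h1 : Tendsto (fun n : ℕ => t (n + 1) / ((n : ℝ) + 1)) atTop (𝓝 E) := by
    have := h.comp (tendsto_add_atTop_nat 1)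
    refine this.congr fun n => ?_
    simp [Function.comp]
  have hr : Tendsto (fun n : ℕ => (n : ℝ) / ((n : ℝ) + 1)) atTop (𝓝 1) :=
    tendsto_natCast_div_add_atTop (1 : ℝ)
  have h2 : Tendsto (fun n : ℕ => (t n / n) * ((n : ℝ) / ((n : ℝ) + 1))) atTop (𝓝 (E * 1)) :=
    h.mul hr
  have h3 := h1.sub h2
  rw [mul_one, sub_self] at h3
  refine h3.congr' ?_
  filter_upwards [eventually_gt_atTop 0] with n hn
  have hn0 : (n : ℝ) ≠ 0 := Nat.cast_ne_zero.2 hn.ne'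
  have hn1 : (n : ℝ) + 1 ≠ 0 := by positivity
  field_simp

-- geometric sum bound
lemma srl_geom_sum_le {a : ℝ} (ha0 : 0 ≤ a) (ha1 : a < 1) (n : ℕ) :
    ∑ i ∈ Finset.range n, a ^ (n - i) ≤ a / (1 - a) := by
  have h1a : (0:ℝ) < 1 - a := by linarith
  have : ∑ i ∈ Finset.range n, a ^ (n - i) = a * ∑ j ∈ Finset.range n, a ^ j := by
    rw [Finset.mul_sum, ← Finset.sum_range_reflect]
    refine Finset.sum_congr rfl fun i hi => ?_
    have hi' := Finset.mem_range.1 hi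
    have : n - (n - 1 - i) = i + 1 := by omega
    rw [this, pow_succ, mul_comm]
  rw [this, div_eq_mul_inv, ← one_div]
  refine mul_le_mul_of_nonneg_left ?_ ha0
  calc ∑ j ∈ Finset.range n, a ^ j = (1 - a ^ n) / (1 - a) := by
        rw [geom_sum_eq (by linarith) n]
        rw [div_eq_div_iff (by linarith) h1a.ne']
        ring
    _ ≤ 1 / (1 - a) := by
        gcongr
        nlinarith [pow_nonneg ha0 n]

-- convolution with geometric kernel of a null sequence
lemma srl_conv {a : ℝ} (ha0 : 0 < a) (ha1 : a < 1) {g : ℕ → ℝ} (hg0 : ∀ i, 0 ≤ g i)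
    (hg : Tendsto g atTop (𝓝 0)) :
    Tendsto (fun n => ∑ i ∈ Finset.range n, a ^ (n - i) * g i) atTop (𝓝 0) := by
  have h1a : (0:ℝ) < 1 - a := by linarith
  rw [Metric.tendsto_atTop]
  intro ε hε
  set δ : ℝ := ε * (1 - a) / (2 * a) with hδdef
  have hδ : 0 < δ := by positivity
  obtain ⟨N, hN⟩ := (Metric.tendsto_atTop.1 hg) δ hδ
  set C : ℝ := ∑ i ∈ Finset.range N, g i with hC
  have hC0 : 0 ≤ C := Finset.sum_nonneg fun i _ => hg0 i
  have htail : Tendsto (fun n : ℕ => a ^ (n - N) * C) atTop (𝓝 0) := by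
    have : Tendsto (fun n : ℕ => a ^ n * C) atTop (𝓝 0) := by
      simpa using (tendsto_pow_atTop_nhds_zero_of_lt_one ha0.le ha1).mul_const C
    exact this.comp (tendsto_sub_atTop_nat N)
  obtain ⟨M, hM⟩ := (Metric.tendsto_atTop.1 htail) (ε / 2) (by positivity)
  refine ⟨max N M, fun n hn => ?_⟩
  have hnN : N ≤ n := le_trans (le_max_left _ _) hn
  have hnM : M ≤ n := le_trans (le_max_right _ _) hn
  have hS0 : 0 ≤ ∑ i ∈ Finset.range n, a ^ (n - i) * g i :=
    Finset.sum_nonneg fun i _ => mul_nonneg (pow_nonneg ha0.le _) (hg0 i)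
  rw [Real.dist_eq, sub_zero, abs_of_nonneg hS0]
  rw [← Finset.sum_range_add_sum_Ico _ hnN]
  have hb1 : ∑ i ∈ Finset.range N, a ^ (n - i) * g i ≤ a ^ (n - N) * C := by
    rw [hC, Finset.mul_sum]
    refine Finset.sum_le_sum fun i hi => ?_
    refine mul_le_mul_of_nonneg_right ?_ (hg0 i)
    have hi' := Finset.mem_range.1 hi
    exact pow_le_pow_of_le_one ha0.le ha1.le (by omega)
  have hb2 : ∑ i ∈ Finset.Ico N n, a ^ (n - i) * g i ≤ δ * (a / (1 - a)) := by
    calc ∑ i ∈ Finset.Ico N n, a ^ (n - i) * g i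
        ≤ ∑ i ∈ Finset.Ico N n, a ^ (n - i) * δ := by
          refine Finset.sum_le_sum fun i hi => ?_
          refine mul_le_mul_of_nonneg_left ?_ (pow_nonneg ha0.le _)
          have := hN i (Finset.mem_Ico.1 hi).1
          rw [Real.dist_eq, sub_zero, abs_of_nonneg (hg0 i)] at this
          exact this.le
      _ = (∑ i ∈ Finset.Ico N n, a ^ (n - i)) * δ := by rw [Finset.sum_mul]
      _ ≤ (a / (1 - a)) * δ := by
          refine mul_le_mul_of_nonneg_right ?_ hδ.le
          refine le_trans (Finset.sum_le_sum_of_subset_of_nonneg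
            (Finset.Ico_subset_Ico_left (Nat.zero_le N)) fun i _ _ => pow_nonneg ha0.le _) ?_
          rw [← Finset.range_eq_Ico]
          exact srl_geom_sum_le ha0.le ha1 n
      _ = δ * (a / (1 - a)) := by ring
  have hδval : δ * (a / (1 - a)) = ε / 2 := by
    rw [hδdef]; field_simp
  have htailn : a ^ (n - N) * C < ε / 2 := by
    have := hM n hnM
    rw [Real.dist_eq, sub_zero, abs_of_nonneg (mul_nonneg (pow_nonneg ha0.le _) hC0)] at this
    exact this
  linarith

-- summation identity
lemma srl_identity (a : ℝ) (Y X : ℕ → ℝ) (hY : ∀ i, Y (i + 1) = a * Y i + a * X (i + 1)) :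
    ∀ n, (1 - a) * ∑ j ∈ Finset.Icc 1 n, Y j
      = a * (Y 0 - Y n) + a * ∑ j ∈ Finset.Icc 1 n, X j := by
  intro n
  induction n with
  | zero => simp
  | succ n ih =>
    rw [Finset.sum_Icc_succ_top (by omega : 1 ≤ n + 1),
        Finset.sum_Icc_succ_top (by omega : 1 ≤ n + 1), hY n]
    linear_combination ih

-- explicit bound
lemma srl_bound (a : ℝ) (ha0 : 0 ≤ a) (Y X : ℕ → ℝ)
    (hY : ∀ i, Y (i + 1) = a * Y i + a * X (i + 1)) :
    ∀ n, |Y n| ≤ a ^ n * |Y 0| + ∑ i ∈ Finset.range n, a ^ (n - i) * |X (i + 1)| := by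
  intro n
  induction n with
  | zero => simp
  | succ n ih =>
    rw [hY n, Finset.sum_range_succ]
    have h1 : |a * Y n + a * X (n + 1)| ≤ a * |Y n| + a * |X (n + 1)| := by
      refine le_trans (abs_add_le _ _) ?_
      rw [abs_mul, abs_mul, abs_of_nonneg ha0]
    refine le_trans h1 ?_
    have h2 : a * |Y n| ≤ a * (a ^ n * |Y 0| + ∑ i ∈ Finset.range n, a ^ (n - i) * |X (i + 1)|) :=
      mul_le_mul_of_nonneg_left ih ha0
    have h3 : ∑ i ∈ Finset.range n, a ^ (n + 1 - i) * |X (i + 1)|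
        = a * ∑ i ∈ Finset.range n, a ^ (n - i) * |X (i + 1)| := by
      rw [Finset.mul_sum]
      refine Finset.sum_congr rfl fun i hi => ?_
      have hi' := Finset.mem_range.1 hi
      have : n + 1 - i = (n - i) + 1 := by omega
      rw [this, pow_succ]; ring
    have h4 : n + 1 - n = 1 := by omega
    rw [h3, h4, pow_succ, pow_one]
    ring_nf
    ring_nf at h2
    nlinarith [ih, ha0, h2]

lemma srl_z_rec (a c : ℝ) (v : ℕ → ℝ) (n : ℕ) :
    a ^ (n + 1) * c + ∑ i ∈ Finset.range (n + 1), a ^ (n + 1 - i) * v (i + 1)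
      = a * (a ^ n * c + ∑ i ∈ Finset.range n, a ^ (n - i) * v (i + 1)) + a * v (n + 1) := by
  rw [Finset.sum_range_succ]
  have h4 : n + 1 - n = 1 := by omega
  have h3 : ∑ i ∈ Finset.range n, a ^ (n + 1 - i) * v (i + 1)
      = a * ∑ i ∈ Finset.range n, a ^ (n - i) * v (i + 1) := by
    rw [Finset.mul_sum]
    refine Finset.sum_congr rfl fun i hi => ?_
    have hi' := Finset.mem_range.1 hi
    have : n + 1 - i = (n - i) + 1 := by omega
    rw [this, pow_succ]; ring
  rw [h3, h4, pow_succ, pow_one]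
  ring

theorem scalar_recursion_almost_sure_limits
    {Ω : Type} [MeasurableSpace Ω] (P : Measure Ω) [IsProbabilityMeasure P]
    (a : ℝ) (ha0 : 0 < a) (ha1 : a < 1)
    (x : ℕ → Ω → ℝ)
    (hxmeas : ∀ i, Measurable (x i))
    (hxint : Integrable (x 1) P)
    (hindep : iIndepFun (m := fun _ : ℕ => (inferInstance : MeasurableSpace ℝ))
      (fun (i : ℕ) (ω : Ω) => x (i + 1) ω) P)
    (hident : ∀ i : ℕ, 1 ≤ i → IdentDistrib (x i) (x 1) P P)
    (mx : ℝ) (hmx : ∫ ω, x 1 ω ∂P = mx)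
    (y : ℕ → Ω → ℝ) (y0 : ℝ)
    (hy0 : ∀ ω, y 0 ω = y0)
    (hy : ∀ (i : ℕ) (ω : Ω), y (i + 1) ω = a * y i ω + a * x (i + 1) ω) :
    (∀ᵐ ω ∂P, Tendsto (fun (i : ℕ) => y i ω / (i : ℝ)) atTop (𝓝 0)) ∧
    (∀ᵐ ω ∂P, Tendsto (fun (i : ℕ) => (1 / (i : ℝ)) * ∑ j ∈ Finset.Icc 1 i, y j ω)
      atTop (𝓝 (a * mx / (1 - a)))) ∧
    (∀ᵐ ω ∂P,
      IsBoundedUnder (· ≤ ·) atTop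
        (fun (i : ℕ) => (1 / (i : ℝ)) * ∑ j ∈ Finset.Icc 1 i, |y j ω|) ∧
      Filter.limsup (fun (i : ℕ) => (1 / (i : ℝ)) * ∑ j ∈ Finset.Icc 1 i, |y j ω|) atTop ≤
        a * (∫ ω', |x 1 ω'| ∂P) / (1 - a)) := by
  have h1a : (0:ℝ) < 1 - a := by linarith
  set Ex : ℝ := ∫ ω', |x 1 ω'| ∂P with hEx
  -- SLLN for x
  set X : ℕ → Ω → ℝ := fun i ω => x (i + 1) ω with hXdef
  have hident' : ∀ i, IdentDistrib (X i) (X 0) P P := fun i => hident (i + 1) (by omega)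
  have hpair : Pairwise (Function.onFun (IndepFun · · P) X) := fun i j hij => hindep.indepFun hij
  have hslln1 := strong_law_ae_real X hxint hpair hident'
  have hmx' : (∫ ω, X 0 ω ∂P) = mx := hmx
  rw [hmx'] at hslln1
  -- SLLN for |x|
  set Xa : ℕ → Ω → ℝ := fun i ω => |x (i + 1) ω| with hXadef
  have habs : Measurable (fun r : ℝ => |r|) := continuous_abs.measurable
  have hpair_a : Pairwise (Function.onFun (IndepFun · · P) Xa) := fun i j hij =>
    (hindep.indepFun hij).comp habs habs
  have hident_a : ∀ i, IdentDistrib (Xa i) (Xa 0) P P := fun i =>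
    (hident (i + 1) (by omega)).comp habs
  have hslln2 := strong_law_ae_real Xa hxint.abs hpair_a hident_a
  have hEx' : (∫ ω, Xa 0 ω ∂P) = Ex := rfl
  rw [hEx'] at hslln2
  -- master a.e. statement
  have key : ∀ᵐ ω ∂P,
      Tendsto (fun (i : ℕ) => y i ω / (i : ℝ)) atTop (𝓝 0) ∧
      Tendsto (fun (i : ℕ) => (1 / (i : ℝ)) * ∑ j ∈ Finset.Icc 1 i, y j ω)
        atTop (𝓝 (a * mx / (1 - a))) ∧
      (IsBoundedUnder (· ≤ ·) atTop
        (fun (i : ℕ) => (1 / (i : ℝ)) * ∑ j ∈ Finset.Icc 1 i, |y j ω|) ∧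
      Filter.limsup (fun (i : ℕ) => (1 / (i : ℝ)) * ∑ j ∈ Finset.Icc 1 i, |y j ω|) atTop ≤
        a * Ex / (1 - a)) := by
    filter_upwards [hslln1, hslln2] with ω hω1 hω2
    -- x_n / n → 0 (abs version)
    have hv : Tendsto (fun n : ℕ => |x (n + 1) ω| / ((n : ℝ) + 1)) atTop (𝓝 0) := by
      have := srl_cesaro (t := fun n => ∑ i ∈ Finset.range n, Xa i ω) hω2
      refine this.congr fun n => ?_
      simp [Finset.sum_range_succ, hXadef]
    set g : ℕ → ℝ := fun n => |x (n + 1) ω| / ((n : ℝ) + 1) with hgdef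
    have hg0 : ∀ i, 0 ≤ g i := fun i => div_nonneg (abs_nonneg _) (by positivity)
    have hconv := srl_conv ha0 ha1 hg0 hv
    -- part 1
    have habound := srl_bound a ha0.le (fun n => y n ω) (fun n => x n ω) (fun i => hy i ω)
    have hB : Tendsto (fun n : ℕ => a ^ n * |y0| + ∑ i ∈ Finset.range n, a ^ (n - i) * g i)
        atTop (𝓝 0) := by
      have h1 : Tendsto (fun n : ℕ => a ^ n * |y0|) atTop (𝓝 0) := by
        simpa using (tendsto_pow_atTop_nhds_zero_of_lt_one ha0.le ha1).mul_const |y0|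
      simpa using h1.add hconv
    set z : ℕ → ℝ := fun n => a ^ n * |y0| + ∑ i ∈ Finset.range n, a ^ (n - i) * |x (i + 1) ω|
      with hzdef
    have hz_rec : ∀ i, z (i + 1) = a * z i + a * |x (i + 1) ω| :=
      fun i => srl_z_rec a |y0| (fun j => |x j ω|) i
    have hz0 : ∀ n, 0 ≤ z n := fun n => add_nonneg
      (mul_nonneg (pow_nonneg ha0.le _) (abs_nonneg _))
      (Finset.sum_nonneg fun i _ => mul_nonneg (pow_nonneg ha0.le _) (abs_nonneg _))
    have hyz : ∀ n, |y n ω| ≤ z n := fun n => by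
      simpa [hy0 ω, hzdef] using habound n
    have hpt : ∀ n : ℕ, |y n ω / (n : ℝ)|
        ≤ a ^ n * |y0| + ∑ i ∈ Finset.range n, a ^ (n - i) * g i := by
      intro n
      rcases Nat.eq_zero_or_pos n with hn | hn
      · subst hn
        simp
      · have hn0 : (0:ℝ) < (n : ℝ) := by exact_mod_cast hn
        have hn1 : (1:ℝ) ≤ (n : ℝ) := by exact_mod_cast hn
        have e1 : |y n ω / (n : ℝ)| = |y n ω| / n := by
          rw [abs_div, Nat.abs_cast]
        rw [e1]
        have e2 : |y n ω| / (n : ℝ) ≤ z n / n := by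
          gcongr
          exact hyz n
        refine e2.trans ?_
        rw [hzdef]
        rw [add_div]
        refine add_le_add ?_ ?_
        · exact div_le_self (mul_nonneg (pow_nonneg ha0.le _) (abs_nonneg _)) hn1
        · rw [Finset.sum_div]
          refine Finset.sum_le_sum fun i hi => ?_
          have hi' := Finset.mem_range.1 hi
          rw [mul_div_assoc]
          refine mul_le_mul_of_nonneg_left ?_ (pow_nonneg ha0.le _)
          refine div_le_div_of_nonneg_left (abs_nonneg _) (by positivity) ?_
          have : (i:ℝ) + 1 ≤ (n:ℝ) := by exact_mod_cast Nat.succ_le_of_lt hi'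
          exact this
    have hpart1 : Tendsto (fun n : ℕ => y n ω / (n : ℝ)) atTop (𝓝 0) := by
      rw [tendsto_zero_iff_abs_tendsto_zero]
      exact squeeze_zero (fun n => abs_nonneg _) hpt hB
    refine ⟨hpart1, ?_, ?_⟩
    -- part 2
    · have hS : Tendsto (fun n : ℕ => (∑ j ∈ Finset.Icc 1 n, x j ω) / (n : ℝ)) atTop (𝓝 mx) := by
        refine hω1.congr fun n => ?_
        rw [srl_sum_Icc (fun j => x j ω) n]
      have hiden : ∀ n : ℕ, ∑ j ∈ Finset.Icc 1 n, y j ω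
          = (a * (y0 - y n ω) + a * ∑ j ∈ Finset.Icc 1 n, x j ω) / (1 - a) := by
        intro n
        have := srl_identity a (fun n => y n ω) (fun n => x n ω) (fun i => hy i ω) n
        simp only [hy0] at this
        rw [eq_div_iff h1a.ne']
        linarith [this]
      have ht1 : Tendsto (fun n : ℕ => a * (y0 * (1 / (n : ℝ)))) atTop (𝓝 (a * (y0 * 0))) :=
        ((tendsto_one_div_atTop_nhds_zero_nat.const_mul y0).const_mul a)
      have ht2 : Tendsto (fun n : ℕ => a * (y n ω / (n : ℝ))) atTop (𝓝 (a * 0)) :=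
        hpart1.const_mul a
      have ht3 : Tendsto (fun n : ℕ => a * ((∑ j ∈ Finset.Icc 1 n, x j ω) / (n : ℝ)))
          atTop (𝓝 (a * mx)) := hS.const_mul a
      have hmain := ((ht1.sub ht2).add ht3).mul_const (1 - a)⁻¹
      have hval : (a * (y0 * 0) - a * 0 + a * mx) * (1 - a)⁻¹ = a * mx / (1 - a) := by
        ring
      rw [hval] at hmain
      refine hmain.congr fun n => ?_
      rw [hiden n]
      simp only [div_eq_mul_inv, one_mul]
      ring
    -- part 3
    · have hzinit : z 0 = |y0| := by simp [hzdef]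
      have hT : Tendsto (fun n : ℕ => (∑ j ∈ Finset.Icc 1 n, |x j ω|) / (n : ℝ))
          atTop (𝓝 Ex) := by
        refine hω2.congr fun n => ?_
        rw [srl_sum_Icc (fun j => |x j ω|) n]
      have hidenz : ∀ n : ℕ, ∑ j ∈ Finset.Icc 1 n, z j
          = (a * (|y0| - z n) + a * ∑ j ∈ Finset.Icc 1 n, |x j ω|) / (1 - a) := by
        intro n
        have := srl_identity a z (fun j => |x j ω|) hz_rec n
        rw [hzinit] at this
        rw [eq_div_iff h1a.ne']
        linarith [this]
      set b : ℕ → ℝ := fun n =>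
        (a * (|y0| * (1 / (n : ℝ))) + a * ((∑ j ∈ Finset.Icc 1 n, |x j ω|) / (n : ℝ)))
          * (1 - a)⁻¹ with hbdef
      have hb : Tendsto b atTop (𝓝 ((a * (|y0| * 0) + a * Ex) * (1 - a)⁻¹)) :=
        (((tendsto_one_div_atTop_nhds_zero_nat.const_mul |y0|).const_mul a).add
          (hT.const_mul a)).mul_const (1 - a)⁻¹
      have hbval : (a * (|y0| * 0) + a * Ex) * (1 - a)⁻¹ = a * Ex / (1 - a) := by ring
      rw [hbval] at hb
      have hle : ∀ n : ℕ, (1 / (n : ℝ)) * ∑ j ∈ Finset.Icc 1 n, |y j ω| ≤ b n := by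
        intro n
        have hn0 : (0:ℝ) ≤ 1 / (n : ℝ) := by positivity
        have step1 : (1 / (n : ℝ)) * ∑ j ∈ Finset.Icc 1 n, |y j ω|
            ≤ (1 / (n : ℝ)) * ∑ j ∈ Finset.Icc 1 n, z j :=
          mul_le_mul_of_nonneg_left (Finset.sum_le_sum fun j _ => hyz j) hn0
        have step2 : (1 / (n : ℝ)) * ∑ j ∈ Finset.Icc 1 n, z j
            = b n - a * (z n * (1 / (n : ℝ))) * (1 - a)⁻¹ := by
          rw [hidenz n, hbdef]
          simp only [div_eq_mul_inv, one_mul]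
          ring
        have hD : 0 ≤ a * (z n * (1 / (n : ℝ))) * (1 - a)⁻¹ :=
          mul_nonneg (mul_nonneg ha0.le (mul_nonneg (hz0 n) hn0)) (by positivity)
        linarith [step1, step2.le, step2.ge]
      refine ⟨(hb.isBoundedUnder_le).mono_le (Eventually.of_forall hle), ?_⟩
      have hlimsup : Filter.limsup b atTop = a * Ex / (1 - a) := hb.limsup_eq
      rw [← hlimsup]
      refine Filter.limsup_le_limsup (Eventually.of_forall hle) ?_ ?_
      · refine isCoboundedUnder_le_of_le atTop (x := 0) fun n => ?_
        exact mul_nonneg (by positivity) (Finset.sum_nonneg fun j _ => abs_nonneg _)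
      · exact hb.isBoundedUnder_le
  exact ⟨key.mono fun ω h => h.1, key.mono fun ω h => h.2.1, key.mono fun ω h => h.2.2⟩
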